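/- The paramagnetic–ferromagnetic boundary function Γ(β)=βH(X,Y)+Σ_y P(y) ln[Σ_x P(x,y)^β] satisfies Γ(1)=H(X|Y), and Γ(β) ≥ H(X|Y) for every β ≥ 0. -/

import Mathlib

open Real Finset

/-- The marginal `P(y) = Σ_x P(x,y)`. -/
noncomputable def Pmarg {X Y : Type*} [Fintype X] (P : X → Y → ℝ) (y : Y) : ℝ := ∑ x, P x y

/-- The joint entropy `H(X,Y) = −Σ_{x,y} P(x,y) ln P(x,y)`. -/
noncomputable def entXY {X Y : Type*} [Fintype X] [Fintype Y] (P : X → Y → ℝ) : ℝ :=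
  -∑ x, ∑ y, P x y * Real.log (P x y)

/-- The conditional entropy `H(X|Y) = −Σ_{x,y} P(x,y) ln (P(x,y)/P(y))`. -/
noncomputable def entXgY {X Y : Type*} [Fintype X] [Fintype Y] (P : X → Y → ℝ) : ℝ :=
  -∑ x, ∑ y, P x y * Real.log (P x y / Pmarg P y)

/-- The paramagnetic–ferromagnetic boundary function
`Γ(β) = β H(X,Y) + Σ_y P(y) ln [Σ_x P(x,y)^β]`. -/
noncomputable def Gamma {X Y : Type*} [Fintype X] [Fintype Y] (P : X → Y → ℝ) (β : ℝ) : ℝ :=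
  β * entXY P + ∑ y, Pmarg P y * Real.log (∑ x, P x y ^ β)

lemma gamma_eq {X Y : Type*} [Fintype X] [Fintype Y] (P : X → Y → ℝ) (β : ℝ) :
    Gamma P β = β * entXY P + ∑ y, Pmarg P y * Real.log (∑ x, P x y ^ β) := rfl

/-- `Γ(1) = H(X|Y)` and `Γ(β) ≥ H(X|Y)` for every `β ≥ 0`. -/
theorem stmt10 {X Y : Type*} [Fintype X] [Fintype Y]
    (P : X → Y → ℝ) (hpos : ∀ x y, 0 < P x y) (hsum : ∑ x, ∑ y, P x y = 1) :
    Gamma P 1 = entXgY P ∧ ∀ β : ℝ, 0 ≤ β → entXgY P ≤ Gamma P β := by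
  have hX : Nonempty X := by
    by_contra h
    rw [not_nonempty_iff] at h
    simp at hsum
  have hY : Nonempty Y := by
    by_contra h
    rw [not_nonempty_iff] at h
    simp at hsum
  have hm : ∀ y, 0 < Pmarg P y := fun y =>
    Finset.sum_pos (fun x _ => hpos x y) Finset.univ_nonempty
  have hsplit : ∀ x y, P x y * Real.log (P x y / Pmarg P y)
      = P x y * Real.log (P x y) - P x y * Real.log (Pmarg P y) := by
    intro x y
    rw [Real.log_div (hpos x y).ne' (hm y).ne', mul_sub]
  have hswap : ∑ x, ∑ y, P x y * Real.log (Pmarg P y)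
      = ∑ y, Pmarg P y * Real.log (Pmarg P y) := by
    rw [Finset.sum_comm]
    refine Finset.sum_congr rfl fun y _ => ?_
    rw [Pmarg, Finset.sum_mul]
  have hent : entXgY P = entXY P + ∑ y, Pmarg P y * Real.log (Pmarg P y) := by
    unfold entXgY entXY
    simp only [hsplit, Finset.sum_sub_distrib]
    rw [hswap]
    ring
  constructor
  · -- Γ(1) = H(X|Y)
    have h1 : ∀ y, ∑ x, P x y ^ (1 : ℝ) = Pmarg P y := by
      intro y
      simp [Pmarg, Real.rpow_one]
    rw [gamma_eq, hent]
    simp only [h1, one_mul]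
  · intro β hβ
    have hs : ∀ y, 0 < ∑ x, P x y ^ β := fun y =>
      Finset.sum_pos (fun x _ => Real.rpow_pos_of_pos (hpos x y) β) Finset.univ_nonempty
    -- key per-y inequality
    have key : ∀ y, (∑ x, (β * (P x y * Real.log (P x y))
          - P x y * Real.log (P x y / Pmarg P y)))
        ≤ Pmarg P y * Real.log (∑ x, P x y ^ β) := by
      intro y
      have hs' : (0:ℝ) < ∑ x, P x y ^ β := hs y
      have h2 : ∀ x, β * (P x y * Real.log (P x y)) - P x y * Real.log (P x y / Pmarg P y)
            - P x y * Real.log (∑ x', P x' y ^ β)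
          = P x y * Real.log (P x y ^ β * Pmarg P y / (P x y * ∑ x', P x' y ^ β)) := by
        intro x
        have hlog : Real.log (P x y ^ β * Pmarg P y / (P x y * ∑ x', P x' y ^ β))
            = β * Real.log (P x y) + Real.log (Pmarg P y)
              - (Real.log (P x y) + Real.log (∑ x', P x' y ^ β)) := by
          rw [Real.log_div (mul_pos (Real.rpow_pos_of_pos (hpos x y) β) (hm y)).ne'
              (mul_pos (hpos x y) hs').ne',
            Real.log_mul (Real.rpow_pos_of_pos (hpos x y) β).ne' (hm y).ne',
            Real.log_mul (hpos x y).ne' hs'.ne',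
            Real.log_rpow (hpos x y)]
        rw [hlog, hsplit x y]
        ring
      have h3 : ∀ x, P x y * Real.log (P x y ^ β * Pmarg P y / (P x y * ∑ x', P x' y ^ β))
          ≤ P x y ^ β * (Pmarg P y / ∑ x', P x' y ^ β) - P x y := by
        intro x
        have hb : (0:ℝ) < P x y ^ β * Pmarg P y / (P x y * ∑ x', P x' y ^ β) :=
          div_pos (mul_pos (Real.rpow_pos_of_pos (hpos x y) β) (hm y))
            (mul_pos (hpos x y) hs')
        have hle := Real.log_le_sub_one_of_pos hb
        have h4 : P x y * (P x y ^ β * Pmarg P y / (P x y * ∑ x', P x' y ^ β) - 1)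
            = P x y ^ β * (Pmarg P y / ∑ x', P x' y ^ β) - P x y := by
          field_simp [(hpos x y).ne', hs'.ne']
        calc P x y * Real.log (P x y ^ β * Pmarg P y / (P x y * ∑ x', P x' y ^ β))
            ≤ P x y * (P x y ^ β * Pmarg P y / (P x y * ∑ x', P x' y ^ β) - 1) :=
              mul_le_mul_of_nonneg_left hle (hpos x y).le
          _ = _ := h4
      have h5 : ∑ x, (P x y ^ β * (Pmarg P y / ∑ x', P x' y ^ β) - P x y) = 0 := by
        rw [Finset.sum_sub_distrib, ← Finset.sum_mul]
        rw [show (∑ x, P x y) = Pmarg P y from rfl]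
        field_simp
        ring
      have h6 : ∑ x, (β * (P x y * Real.log (P x y))
            - P x y * Real.log (P x y / Pmarg P y) - P x y * Real.log (∑ x', P x' y ^ β))
          ≤ 0 := by
        rw [← h5]
        refine Finset.sum_le_sum fun x _ => ?_
        rw [h2 x]
        exact h3 x
      have h7 : ∑ x, (β * (P x y * Real.log (P x y))
            - P x y * Real.log (P x y / Pmarg P y) - P x y * Real.log (∑ x', P x' y ^ β))
          = (∑ x, (β * (P x y * Real.log (P x y)) - P x y * Real.log (P x y / Pmarg P y)))
            - Pmarg P y * Real.log (∑ x', P x' y ^ β) := by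
        rw [Finset.sum_sub_distrib, ← Finset.sum_mul]
        rfl
      rw [h7] at h6
      linarith
    have hkeysum : ∑ y, (∑ x, (β * (P x y * Real.log (P x y))
          - P x y * Real.log (P x y / Pmarg P y)))
        ≤ ∑ y, Pmarg P y * Real.log (∑ x, P x y ^ β) :=
      Finset.sum_le_sum fun y _ => key y
    have hlhs : ∑ y, (∑ x, (β * (P x y * Real.log (P x y))
          - P x y * Real.log (P x y / Pmarg P y)))
        = entXgY P - β * entXY P := by
      rw [Finset.sum_comm]
      unfold entXgY entXY
      simp only [Finset.sum_sub_distrib, ← Finset.mul_sum]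
      ring
    rw [hlhs] at hkeysum
    rw [gamma_eq]
    linarith
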